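/- For a Monotonic Single-Source k-DTSN instance, composing the layered reduction to Directed Steiner Tree with an α(k)-approximation algorithm for DST yields an α(k)-approximation for the temporal problem: if the DST algorithm returns a solution of cost at most α(k)·OPT_DST, then the projected temporal solution has cost at most α(k)·OPT_temporal. -/

import Mathlib

/-- Edges of the layered Directed Steiner Tree graph built from the temporal
directed graph with frames `E i`. -/
def layerEdges {V : Type*} (E : ℕ → Set (V × V)) : Set ((V × ℕ) × (V × ℕ)) :=
  {p | (p.1.2 = p.2.2 ∧ (p.1.1, p.2.1) ∈ E p.1.2) ∨ (p.1.1 = p.2.1 ∧ p.2.2 = p.1.2 + 1)}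

/-- Weights in the layered graph. -/
def layerWeight {V : Type*} (w : V × V → ℝ) (p : (V × ℕ) × (V × ℕ)) : ℝ :=
  if p.1.2 = p.2.2 then w (p.1.1, p.2.1) else 0

/-- Projection of a layered DST solution back to the underlying temporal graph. -/
def projSol {V : Type*} [DecidableEq V] (H' : Finset ((V × ℕ) × (V × ℕ))) :
    Finset (V × V) :=
  (H'.filter (fun e => e.1.2 = e.2.2)).image (fun e => (e.1.1, e.2.1))

/-- Sum over an image is at most the pushforward sum, for nonnegative weights. -/
lemma sum_image_le_aux {α β : Type*} [DecidableEq β] (s : Finset α) (g : α → β)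
    (f : β → ℝ) (hf : ∀ b, 0 ≤ f b) :
    ∑ b ∈ s.image g, f b ≤ ∑ a ∈ s, f (g a) := by
  classical
  induction s using Finset.induction with
  | empty => simp
  | @insert a s h ih =>
    rw [Finset.image_insert, Finset.sum_insert h]
    by_cases hga : g a ∈ s.image g
    · rw [Finset.insert_eq_self.mpr hga]
      exact le_add_of_nonneg_of_le (hf _) ih
    · rw [Finset.sum_insert hga]
      exact add_le_add le_rfl ih

/-- Projecting a layered walk gives a temporal walk, and levels are monotone. -/
lemma proj_walk {V : Type*} [DecidableEq V] (E : ℕ → Set (V × V)) (hmono : Monotone E)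
    (Hdst : Finset ((V × ℕ) × (V × ℕ))) (hsub : ↑Hdst ⊆ layerEdges E)
    {x y : V × ℕ} (h : Relation.ReflTransGen (fun p q => (p, q) ∈ Hdst) x y) :
    Relation.ReflTransGen
      (fun u v => (u, v) ∈ projSol Hdst ∧ (u, v) ∈ E y.2) x.1 y.1 ∧ x.2 ≤ y.2 := by
  induction h with
  | refl => exact ⟨Relation.ReflTransGen.refl, le_rfl⟩
  | tail h step ih =>
    rename_i p q
    rcases hsub step with ⟨heq, hE⟩ | ⟨heq, hlev⟩
    · have heq' : p.2 = q.2 := heq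
      have hE' : (p.1, q.1) ∈ E p.2 := hE
      refine ⟨Relation.ReflTransGen.tail
        (Relation.ReflTransGen.mono ?_ _ _ ih.1) ⟨?_, by rw [← heq']; exact hE'⟩, ih.2.trans heq'.le⟩
      · intro u v huv
        exact ⟨huv.1, hmono heq'.le huv.2⟩
      · exact Finset.mem_image.mpr ⟨(p, q), Finset.mem_filter.mpr ⟨step, heq⟩, rfl⟩
    · have heq' : p.1 = q.1 := heq
      have hlev' : q.2 = p.2 + 1 := hlev
      refine ⟨?_, by omega⟩
      rw [← heq']
      exact Relation.ReflTransGen.mono (fun u v huv => ⟨huv.1, hmono (by omega) huv.2⟩) _ _ ih.1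

/-- composing the layered reduction with an `α`-approximation
algorithm for Directed Steiner Tree yields an `α`-approximation for Monotonic
Single-Source k-DTSN: if `Hdst` is a DST solution of cost at most `α · OPT_DST`,
then its projection is feasible for the temporal instance and has cost at most
`α · OPT_temporal`. -/
theorem stmt17 {V : Type*} [DecidableEq V] {k : ℕ}
    (E : ℕ → Set (V × V)) (hmono : Monotone E)
    (w : V × V → ℝ) (hw : ∀ e, 0 ≤ w e)
    (a : V) (b : Fin k → V) (t : Fin k → ℕ) (ht : Monotone t)
    (α : ℝ) (hα : 0 ≤ α)
    (Hdst : Finset ((V × ℕ) × (V × ℕ))) (hsub : ↑Hdst ⊆ layerEdges E)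
    (hfeas : ∀ i, Relation.ReflTransGen (fun x y => (x, y) ∈ Hdst) (a, 0) (b i, t i))
    (happrox : ∀ H' : Finset ((V × ℕ) × (V × ℕ)), ↑H' ⊆ layerEdges E →
      (∀ i, Relation.ReflTransGen (fun x y => (x, y) ∈ H') (a, 0) (b i, t i)) →
      (∑ e ∈ Hdst, layerWeight w e) ≤ α * ∑ e ∈ H', layerWeight w e) :
    (∀ i, Relation.ReflTransGen
      (fun u v => (u, v) ∈ projSol Hdst ∧ (u, v) ∈ E (t i)) a (b i)) ∧
    (∀ H : Finset (V × V),
      (∀ i, Relation.ReflTransGen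
        (fun u v => (u, v) ∈ H ∧ (u, v) ∈ E (t i)) a (b i)) →
      (∑ e ∈ projSol Hdst, w e) ≤ α * ∑ e ∈ H, w e) := by
  classical
  have hlwnn : ∀ e, 0 ≤ layerWeight w e := by
    intro e; unfold layerWeight; split
    exacts [hw _, le_rfl]
  constructor
  · intro i
    exact (proj_walk E hmono Hdst hsub (hfeas i)).1
  · intro H hH
    -- notation
    set T : ℕ := Finset.univ.sup t with hT
    set Reach : ℕ → V → Prop := fun m x =>
      Relation.ReflTransGen (fun u v => (u, v) ∈ H ∧ (u, v) ∈ E m) a x with hReach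
    set S : V × V → Set ℕ := fun e =>
      {n | (∃ j : Fin k, t j = n) ∧ e ∈ E n ∧ Reach n e.1} with hS
    set ℓ : V × V → ℕ := fun e => sInf (S e) with hℓ
    set cond : V × V → Prop := fun e => (S e).Nonempty with hcond
    set Vtx : Finset V := insert a (H.image Prod.snd) with hVtx
    set Hh : Finset ((V × ℕ) × (V × ℕ)) :=
      (H.filter cond).image (fun e => ((e.1, ℓ e), (e.2, ℓ e))) with hHh
    set Vs : Finset ((V × ℕ) × (V × ℕ)) :=
      (Vtx ×ˢ Finset.range T).image (fun q => ((q.1, q.2), (q.1, q.2 + 1))) with hVs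
    set H' : Finset ((V × ℕ) × (V × ℕ)) := Hh ∪ Vs with hH'
    -- vertical walks
    have vert : ∀ x ∈ Vtx, ∀ m n : ℕ, m ≤ n → n ≤ T →
        Relation.ReflTransGen (fun p q => (p, q) ∈ H') (x, m) (x, n) := by
      intro x hx m n hmn
      induction n, hmn using Nat.le_induction with
      | base => intro _; exact Relation.ReflTransGen.refl
      | succ n hmn ih =>
        intro hnT
        refine Relation.ReflTransGen.tail (ih (by omega)) ?_
        apply Finset.mem_union_right
        exact Finset.mem_image.mpr
          ⟨(x, n), Finset.mem_product.mpr ⟨hx, Finset.mem_range.mpr (by omega)⟩, rfl⟩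
    -- main reachability lemma
    have main : ∀ n : ℕ, (∃ j : Fin k, t j = n) → ∀ x, Reach n x →
        Relation.ReflTransGen (fun p q => (p, q) ∈ H') (a, 0) (x, n) := by
      intro n
      induction n using Nat.strong_induction_on with
      | _ n IH =>
        rintro ⟨j, hj⟩ x hx
        have hnT : n ≤ T := hj ▸ Finset.le_sup (Finset.mem_univ j)
        rw [hReach] at hx
        induction hx with
        | refl =>
          exact vert a (Finset.mem_insert_self a _) 0 n (Nat.zero_le n) hnT
        | tail hprev step ihw =>
          rename_i u v
          have hnS : n ∈ S (u, v) := ⟨⟨j, hj⟩, step.2, hprev⟩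
          have hmem := Nat.sInf_mem (Set.nonempty_of_mem hnS)
          have hle : ℓ (u, v) ≤ n := Nat.sInf_le hnS
          rcases eq_or_lt_of_le hle with heq | hlt
          · refine Relation.ReflTransGen.tail ihw ?_
            apply Finset.mem_union_left
            refine Finset.mem_image.mpr ⟨(u, v),
              Finset.mem_filter.mpr ⟨step.1, Set.nonempty_of_mem hnS⟩, ?_⟩
            rw [heq]
          · -- reroute through the lower level
            obtain ⟨hjex, hEl, hRl⟩ := hmem
            have h1 := IH (ℓ (u, v)) hlt hjex u hRl
            have h2 : Relation.ReflTransGen (fun p q => (p, q) ∈ H')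
                (a, 0) (v, ℓ (u, v)) := by
              refine Relation.ReflTransGen.tail h1 ?_
              apply Finset.mem_union_left
              exact Finset.mem_image.mpr ⟨(u, v),
                Finset.mem_filter.mpr ⟨step.1, Set.nonempty_of_mem hnS⟩, rfl⟩
            refine h2.trans (vert v ?_ (ℓ (u, v)) n hle hnT)
            exact Finset.mem_insert_of_mem
              (Finset.mem_image.mpr ⟨(u, v), step.1, rfl⟩)
    -- feasibility of H' in the layered graph
    have hfeas' : ∀ i, Relation.ReflTransGen (fun p q => (p, q) ∈ H')
        (a, 0) (b i, t i) := fun i => main (t i) ⟨i, rfl⟩ (b i) (hH i)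
    -- H' is a subgraph of the layered graph
    have hsub' : ↑H' ⊆ layerEdges E := by
      intro p hp
      rcases Finset.mem_union.mp hp with hp | hp
      · obtain ⟨e, he, rfl⟩ := Finset.mem_image.mp hp
        obtain ⟨hmem⟩ := (Finset.mem_filter.mp he).2
        have := Nat.sInf_mem (Finset.mem_filter.mp he).2
        exact Or.inl ⟨rfl, this.2.1⟩
      · obtain ⟨q, _, rfl⟩ := Finset.mem_image.mp hp
        exact Or.inr ⟨rfl, rfl⟩
    -- cost bounds
    have hVs0 : ∑ e ∈ Vs, layerWeight w e = 0 := by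
      refine Finset.sum_eq_zero ?_
      intro e he
      obtain ⟨q, _, rfl⟩ := Finset.mem_image.mp he
      simp [layerWeight]
    have hHhsum : ∑ e ∈ Hh, layerWeight w e ≤ ∑ e ∈ H, w e := by
      rw [hHh, Finset.sum_image (by
        intro e _ e' _ hee
        simp only [Prod.mk.injEq] at hee
        exact Prod.ext hee.1.1 hee.2.1)]
      calc ∑ e ∈ H.filter cond, layerWeight w ((e.1, ℓ e), (e.2, ℓ e))
          = ∑ e ∈ H.filter cond, w e := by
            refine Finset.sum_congr rfl fun e _ => ?_
            simp [layerWeight]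
        _ ≤ ∑ e ∈ H, w e :=
            Finset.sum_le_sum_of_subset_of_nonneg (Finset.filter_subset _ _)
              (fun e _ _ => hw e)
    have hcost' : ∑ e ∈ H', layerWeight w e ≤ ∑ e ∈ H, w e := by
      calc ∑ e ∈ H', layerWeight w e
          ≤ ∑ e ∈ Hh, layerWeight w e + ∑ e ∈ Vs \ Hh, layerWeight w e := by
            rw [hH', ← Finset.sum_union (Finset.disjoint_sdiff), Finset.union_sdiff_self_eq_union]
        _ ≤ ∑ e ∈ Hh, layerWeight w e + ∑ e ∈ Vs, layerWeight w e :=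
            add_le_add le_rfl (Finset.sum_le_sum_of_subset_of_nonneg
              (Finset.sdiff_subset) (fun e _ _ => hlwnn e))
        _ ≤ ∑ e ∈ H, w e := by rw [hVs0, add_zero]; exact hHhsum
    -- cost of the projection
    have hproj : ∑ e ∈ projSol Hdst, w e ≤ ∑ e ∈ Hdst, layerWeight w e := by
      calc ∑ e ∈ projSol Hdst, w e
          ≤ ∑ e ∈ Hdst.filter (fun e => e.1.2 = e.2.2), w (e.1.1, e.2.1) :=
            sum_image_le_aux _ _ w hw
        _ = ∑ e ∈ Hdst.filter (fun e => e.1.2 = e.2.2), layerWeight w e := by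
            refine Finset.sum_congr rfl fun e he => ?_
            have := (Finset.mem_filter.mp he).2
            simp [layerWeight, this]
        _ ≤ ∑ e ∈ Hdst, layerWeight w e :=
            Finset.sum_le_sum_of_subset_of_nonneg (Finset.filter_subset _ _)
              (fun e _ _ => hlwnn e)
    calc ∑ e ∈ projSol Hdst, w e
        ≤ ∑ e ∈ Hdst, layerWeight w e := hproj
      _ ≤ α * ∑ e ∈ H', layerWeight w e := happrox H' hsub' hfeas'
      _ ≤ α * ∑ e ∈ H, w e := mul_le_mul_of_nonneg_left hcost' hα
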